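/- For N ≥ 2 Hermitian observables A_1, ..., A_N, a density matrix ρ, and reals β > α > 0: ∑_{i=1}^N Δ²_ρ(A_i) ≥ (1/(αN + (N−2)β)) · [ β·∑_{1≤i<j≤N} Δ²_ρ(A_i + A_j) + α·∑_{1≤i<j≤N} Δ²_ρ(A_i − A_j) + ((α−β)/(N−1)²)·(∑_{1≤i<j≤N} Δ_ρ(A_i + A_j))² ] (bound Z of Theorem 2). -/

import Mathlib

open Finset ComplexOrder Matrix

/-- Variance of an observable `M` in the state `ρ`. -/
noncomputable def qvar {d : ℕ} (ρ M : Matrix (Fin d) (Fin d) ℂ) : ℝ :=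
  ((ρ * M ^ 2).trace - (ρ * M).trace ^ 2).re

/-- Standard deviation of an observable `M` in the state `ρ`. -/
noncomputable def qdev {d : ℕ} (ρ M : Matrix (Fin d) (Fin d) ℂ) : ℝ :=
  Real.sqrt (qvar ρ M)

/-- Covariance-type symmetric bilinear form. -/
noncomputable def qcov {d : ℕ} (ρ X Y : Matrix (Fin d) (Fin d) ℂ) : ℝ :=
  ((((ρ * (X * Y)).trace + (ρ * (Y * X)).trace) / 2
    - (ρ * X).trace * (ρ * Y).trace)).re

lemma qcov_self {d : ℕ} (ρ X : Matrix (Fin d) (Fin d) ℂ) : qcov ρ X X = qvar ρ X := by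
  unfold qcov qvar
  congr 1
  rw [pow_two]
  ring

lemma qcov_comm {d : ℕ} (ρ X Y : Matrix (Fin d) (Fin d) ℂ) : qcov ρ X Y = qcov ρ Y X := by
  unfold qcov
  congr 1
  ring

lemma qcov_add_left {d : ℕ} (ρ X X' Y : Matrix (Fin d) (Fin d) ℂ) :
    qcov ρ (X + X') Y = qcov ρ X Y + qcov ρ X' Y := by
  unfold qcov
  rw [← Complex.add_re]
  congr 1
  simp only [Matrix.mul_add, Matrix.add_mul, Matrix.trace_add]
  ring

lemma qcov_add_right {d : ℕ} (ρ X Y Y' : Matrix (Fin d) (Fin d) ℂ) :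
    qcov ρ X (Y + Y') = qcov ρ X Y + qcov ρ X Y' := by
  rw [qcov_comm, qcov_add_left, qcov_comm ρ Y X, qcov_comm ρ Y' X]

lemma qcov_zero_left {d : ℕ} (ρ Y : Matrix (Fin d) (Fin d) ℂ) : qcov ρ 0 Y = 0 := by
  simp [qcov]

lemma qcov_smul_left {d : ℕ} (ρ X Y : Matrix (Fin d) (Fin d) ℂ) (t : ℝ) :
    qcov ρ (t • X) Y = t * qcov ρ X Y := by
  unfold qcov
  rw [← Complex.re_ofReal_mul]
  congr 1
  simp only [Matrix.smul_mul, Matrix.mul_smul, Matrix.trace_smul, Complex.real_smul]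
  ring

lemma qcov_neg_right {d : ℕ} (ρ X Y : Matrix (Fin d) (Fin d) ℂ) :
    qcov ρ X (-Y) = -qcov ρ X Y := by
  unfold qcov
  rw [← Complex.neg_re]
  congr 1
  simp only [Matrix.mul_neg, Matrix.neg_mul, Matrix.trace_neg]
  ring

lemma qvar_add {d : ℕ} (ρ X Y : Matrix (Fin d) (Fin d) ℂ) :
    qvar ρ (X + Y) = qvar ρ X + qvar ρ Y + 2 * qcov ρ X Y := by
  rw [← qcov_self, ← qcov_self, ← qcov_self, qcov_add_left, qcov_add_right, qcov_add_right,
    qcov_comm ρ Y X]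
  ring

lemma qvar_sub {d : ℕ} (ρ X Y : Matrix (Fin d) (Fin d) ℂ) :
    qvar ρ (X - Y) = qvar ρ X + qvar ρ Y - 2 * qcov ρ X Y := by
  have : X - Y = X + (-Y) := sub_eq_add_neg X Y
  rw [this, qvar_add, qcov_neg_right, ← qcov_self ρ (-Y), show (-Y) = (-1 : ℝ) • Y by simp,
    qcov_smul_left, qcov_comm, qcov_smul_left, qcov_self]
  ring

lemma qvar_smul {d : ℕ} (ρ X : Matrix (Fin d) (Fin d) ℂ) (t : ℝ) :
    qvar ρ (t • X) = t ^ 2 * qvar ρ X := by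
  rw [← qcov_self, qcov_smul_left, qcov_comm, qcov_smul_left, qcov_comm, qcov_self]
  ring

/-- trace of PSD is nonneg. -/
lemma psd_trace_nonneg {d : ℕ} {M : Matrix (Fin d) (Fin d) ℂ} (h : M.PosSemidef) :
    0 ≤ M.trace := by
  rw [Matrix.trace]
  apply Finset.sum_nonneg
  intro i _
  exact h.diag_nonneg

lemma qvar_nonneg {d : ℕ} {ρ : Matrix (Fin d) (Fin d) ℂ}
    (hρ : ρ.PosSemidef) (hρ1 : ρ.trace = 1) {X : Matrix (Fin d) (Fin d) ℂ}
    (hX : X.IsHermitian) : 0 ≤ qvar ρ X := by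
  classical
  set c : ℂ := (ρ * X).trace with hc
  have hcreal : star c = c := by
    rw [hc, ← Matrix.trace_conjTranspose, Matrix.conjTranspose_mul, hX.eq, hρ.isHermitian.eq,
      Matrix.trace_mul_comm]
  set C := X - c • (1 : Matrix (Fin d) (Fin d) ℂ) with hC
  have hCh : Cᴴ = C := by
    rw [hC, Matrix.conjTranspose_sub, hX.eq, Matrix.conjTranspose_smul,
      Matrix.conjTranspose_one, hcreal]
  have key : (ρ * (C * C)).trace = (ρ * X ^ 2).trace - (ρ * X).trace ^ 2 := by
    rw [hC]
    simp only [Matrix.mul_sub, Matrix.sub_mul, Matrix.trace_sub, Matrix.mul_smul,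
      Matrix.smul_mul, Matrix.trace_smul, Matrix.mul_one, Matrix.one_mul, hρ1, ← hc]
    rw [pow_two, ← Matrix.mul_assoc]
    simp only [smul_eq_mul, hρ1]
    ring_nf
  have hpsd : ((C * ρ) * Cᴴ).PosSemidef := hρ.mul_mul_conjTranspose_same C
  have htr : (ρ * (C * C)).trace = ((C * ρ) * Cᴴ).trace := by
    rw [hCh, ← Matrix.mul_assoc, Matrix.trace_mul_comm (ρ * C) C, Matrix.mul_assoc,
      ← Matrix.mul_assoc]
  have h0 : 0 ≤ (ρ * (C * C)).trace := htr ▸ psd_trace_nonneg hpsd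
  have : 0 ≤ ((ρ * X ^ 2).trace - (ρ * X).trace ^ 2) := key ▸ h0
  unfold qvar
  exact_mod_cast (Complex.le_def.mp this).1

lemma qcov_sq_le {d : ℕ} {ρ : Matrix (Fin d) (Fin d) ℂ}
    (hρ : ρ.PosSemidef) (hρ1 : ρ.trace = 1) {X Y : Matrix (Fin d) (Fin d) ℂ}
    (hX : X.IsHermitian) (hY : Y.IsHermitian) :
    qcov ρ X Y ^ 2 ≤ qvar ρ X * qvar ρ Y := by
  have h : ∀ t : ℝ, 0 ≤ qvar ρ Y * (t * t) + (2 * qcov ρ X Y) * t + qvar ρ X := by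
    intro t
    have hH : (X + t • Y).IsHermitian := by
      unfold Matrix.IsHermitian
      rw [Matrix.conjTranspose_add, Matrix.conjTranspose_smul, hX.eq, hY.eq, star_trivial]
    have h0 := qvar_nonneg hρ hρ1 hH
    rw [qvar_add, qvar_smul, qcov_comm, qcov_smul_left, qcov_comm] at h0
    nlinarith [h0]
  have hd := discrim_le_zero h
  rw [discrim] at hd
  nlinarith [hd]

lemma qdev_add_le {d : ℕ} {ρ : Matrix (Fin d) (Fin d) ℂ}
    (hρ : ρ.PosSemidef) (hρ1 : ρ.trace = 1) {X Y : Matrix (Fin d) (Fin d) ℂ}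
    (hX : X.IsHermitian) (hY : Y.IsHermitian) :
    qdev ρ (X + Y) ≤ qdev ρ X + qdev ρ Y := by
  unfold qdev
  have hx := qvar_nonneg hρ hρ1 hX
  have hy := qvar_nonneg hρ hρ1 hY
  have hcs := qcov_sq_le hρ hρ1 hX hY
  have h1 : qcov ρ X Y ≤ Real.sqrt (qvar ρ X) * Real.sqrt (qvar ρ Y) := by
    calc qcov ρ X Y ≤ |qcov ρ X Y| := le_abs_self _
    _ = Real.sqrt (qcov ρ X Y ^ 2) := (Real.sqrt_sq_eq_abs _).symm
    _ ≤ Real.sqrt (qvar ρ X * qvar ρ Y) := Real.sqrt_le_sqrt hcs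
    _ = Real.sqrt (qvar ρ X) * Real.sqrt (qvar ρ Y) := Real.sqrt_mul hx _
  have h2 : qvar ρ (X + Y) ≤ (Real.sqrt (qvar ρ X) + Real.sqrt (qvar ρ Y)) ^ 2 := by
    rw [qvar_add]
    have sx := Real.sq_sqrt hx
    have sy := Real.sq_sqrt hy
    nlinarith [h1]
  calc Real.sqrt (qvar ρ (X + Y)) ≤
      Real.sqrt ((Real.sqrt (qvar ρ X) + Real.sqrt (qvar ρ Y)) ^ 2) := Real.sqrt_le_sqrt h2
    _ = Real.sqrt (qvar ρ X) + Real.sqrt (qvar ρ Y) := by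
        rw [Real.sqrt_sq (by positivity)]

lemma qdev_sum_le {d : ℕ} {ι : Type*} {ρ : Matrix (Fin d) (Fin d) ℂ}
    (hρ : ρ.PosSemidef) (hρ1 : ρ.trace = 1) (s : Finset ι)
    (f : ι → Matrix (Fin d) (Fin d) ℂ) (hf : ∀ i ∈ s, (f i).IsHermitian) :
    qdev ρ (∑ i ∈ s, f i) ≤ ∑ i ∈ s, qdev ρ (f i) := by
  classical
  induction s using Finset.cons_induction with
  | empty => simp [qdev, qvar]
  | cons a s ha ih =>
    rw [Finset.sum_cons, Finset.sum_cons]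
    have hs : (∑ i ∈ s, f i).IsHermitian :=
      Finset.sum_induction f Matrix.IsHermitian (fun a b => Matrix.IsHermitian.add)
        Matrix.isHermitian_zero (fun i hi => hf i (Finset.mem_cons_of_mem hi))
    calc qdev ρ (f a + ∑ i ∈ s, f i) ≤ qdev ρ (f a) + qdev ρ (∑ i ∈ s, f i) :=
        qdev_add_le hρ hρ1 (hf a (Finset.mem_cons_self a s)) hs
      _ ≤ qdev ρ (f a) + ∑ i ∈ s, qdev ρ (f i) := by
          have := ih (fun i hi => hf i (Finset.mem_cons_of_mem hi))
          linarith

lemma card_lt_add_card_gt {N : ℕ} (i : Fin N) :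
    (univ.filter (fun j => i < j)).card + (univ.filter (fun j => j < i)).card = N - 1 := by
  have hunion : (univ.filter (fun j => i < j)) ∪ (univ.filter (fun j => j < i))
      = univ.erase i := by
    ext j
    simp only [Finset.mem_union, Finset.mem_filter, Finset.mem_erase, Finset.mem_univ,
      true_and, and_true]
    omega
  have hdisj : Disjoint (univ.filter (fun j => i < j)) (univ.filter (fun j => j < i)) := by
    rw [Finset.disjoint_left]
    intro j hj1 hj2
    simp only [Finset.mem_filter] at hj1 hj2
    exact absurd (lt_trans hj1.2 hj2.2) (lt_irrefl i)
  have := Finset.card_union_of_disjoint hdisj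
  rw [hunion, Finset.card_erase_of_mem (Finset.mem_univ i), Finset.card_univ,
    Fintype.card_fin] at this
  omega

lemma pair_sum {M : Type*} [AddCommMonoid M] {N : ℕ} (f : Fin N → M) :
    ∑ i, ∑ j ∈ univ.filter (fun j => i < j), (f i + f j) = (N - 1) • ∑ i, f i := by
  have hswap : ∑ i : Fin N, ∑ j ∈ univ.filter (fun j => i < j), f j
      = ∑ j : Fin N, ∑ i ∈ univ.filter (fun i => i < j), f j := by
    apply Finset.sum_comm'
    intro i j
    simp
  calc ∑ i, ∑ j ∈ univ.filter (fun j => i < j), (f i + f j)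
      = ∑ i, ((∑ j ∈ univ.filter (fun j => i < j), f i)
          + ∑ j ∈ univ.filter (fun j => i < j), f j) := by
        simp [Finset.sum_add_distrib]
    _ = (∑ i, ∑ j ∈ univ.filter (fun j => i < j), f i)
          + ∑ i, ∑ j ∈ univ.filter (fun j => i < j), f j := Finset.sum_add_distrib
    _ = (∑ i, (univ.filter (fun j => (i : Fin N) < j)).card • f i)
          + ∑ i, (univ.filter (fun j => j < (i : Fin N))).card • f i := by
        rw [hswap]
        simp [Finset.sum_const]
    _ = ∑ i, ((univ.filter (fun j => (i : Fin N) < j)).card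
          + (univ.filter (fun j => j < (i : Fin N))).card) • f i := by
        rw [← Finset.sum_add_distrib]
        simp [add_smul]
    _ = ∑ i, (N - 1) • f i := by
        apply Finset.sum_congr rfl
        intro i _
        rw [card_lt_add_card_gt]
    _ = (N - 1) • ∑ i, f i := Finset.smul_sum.symm

lemma pair_sum_real {N : ℕ} (hN : 2 ≤ N) (g : Fin N → ℝ) :
    ∑ i, ∑ j ∈ univ.filter (fun j => i < j), (g i + g j) = ((N : ℝ) - 1) * ∑ i, g i := by
  rw [pair_sum]
  rw [nsmul_eq_mul]
  congr 1
  push_cast [Nat.cast_sub (by omega : 1 ≤ N)]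
  ring

lemma qcov_sum_left {d : ℕ} {ι : Type*} (ρ : Matrix (Fin d) (Fin d) ℂ) (s : Finset ι)
    (f : ι → Matrix (Fin d) (Fin d) ℂ) (Y : Matrix (Fin d) (Fin d) ℂ) :
    qcov ρ (∑ i ∈ s, f i) Y = ∑ i ∈ s, qcov ρ (f i) Y := by
  classical
  induction s using Finset.cons_induction with
  | empty => simp [qcov_zero_left]
  | cons a s ha ih => rw [Finset.sum_cons, Finset.sum_cons, qcov_add_left, ih]

lemma qvar_sum_eq {d N : ℕ} (ρ : Matrix (Fin d) (Fin d) ℂ) (f : Fin N → Matrix (Fin d) (Fin d) ℂ) :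
    qvar ρ (∑ i, f i) = ∑ i, qvar ρ (f i)
      + 2 * ∑ i, ∑ j ∈ univ.filter (fun j => i < j), qcov ρ (f i) (f j) := by
  classical
  rw [← qcov_self, qcov_sum_left]
  have hinner : ∀ i : Fin N, qcov ρ (f i) (∑ j, f j) = ∑ j, qcov ρ (f i) (f j) := by
    intro i
    rw [qcov_comm, qcov_sum_left]
    exact Finset.sum_congr rfl fun j _ => qcov_comm ρ (f j) (f i)
  simp only [hinner]
  have hsplit : ∀ i : Fin N, ∑ j, qcov ρ (f i) (f j)
      = qcov ρ (f i) (f i) + (∑ j ∈ univ.filter (fun j => j < i), qcov ρ (f i) (f j))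
        + ∑ j ∈ univ.filter (fun j => i < j), qcov ρ (f i) (f j) := by
    intro i
    rw [← Finset.sum_filter_add_sum_filter_not univ (fun j => (i : Fin N) < j)]
    have : univ.filter (fun j => ¬ (i : Fin N) < j)
        = insert i (univ.filter (fun j => j < i)) := by
      ext j
      simp only [Finset.mem_filter, Finset.mem_insert, Finset.mem_univ, true_and]
      omega
    rw [this, Finset.sum_insert (by simp)]
    ring
  simp only [hsplit]
  rw [Finset.sum_add_distrib, Finset.sum_add_distrib]
  have hswap2 : ∑ i : Fin N, ∑ j ∈ univ.filter (fun j => j < i), qcov ρ (f i) (f j)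
      = ∑ i : Fin N, ∑ j ∈ univ.filter (fun j => i < j), qcov ρ (f i) (f j) := by
    have h1 : ∑ i : Fin N, ∑ j ∈ univ.filter (fun j => j < i), qcov ρ (f i) (f j)
        = ∑ j : Fin N, ∑ i ∈ univ.filter (fun i => j < i), qcov ρ (f i) (f j) := by
      apply Finset.sum_comm'
      intro i j
      simp
    rw [h1]
    exact Finset.sum_congr rfl fun a _ => Finset.sum_congr rfl fun b _ => qcov_comm ρ (f b) (f a)
  rw [hswap2]
  simp only [qcov_self]
  ring

theorem theorem2_Z {d N : ℕ} (hN : 2 ≤ N) (ρ : Matrix (Fin d) (Fin d) ℂ)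
    (hρ : ρ.PosSemidef) (hρ1 : ρ.trace = 1)
    (A : Fin N → Matrix (Fin d) (Fin d) ℂ) (hA : ∀ i, (A i).IsHermitian)
    (α β : ℝ) (hα : 0 < α) (hαβ : α < β) :
    ∑ i, qvar ρ (A i) ≥
      (1 / (α * N + ((N : ℝ) - 2) * β)) *
        (β * (∑ i : Fin N, ∑ j ∈ univ.filter (fun j => i < j), qvar ρ (A i + A j)) +
         α * (∑ i : Fin N, ∑ j ∈ univ.filter (fun j => i < j), qvar ρ (A i - A j)) +
         ((α - β) / ((N : ℝ) - 1) ^ 2) *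
          (∑ i : Fin N, ∑ j ∈ univ.filter (fun j => i < j), qdev ρ (A i + A j)) ^ 2) := by
  classical
  have hN2 : (2 : ℝ) ≤ (N : ℝ) := by exact_mod_cast hN
  set S : ℝ := ∑ i, qvar ρ (A i) with hS
  set C2 : ℝ := ∑ i : Fin N, ∑ j ∈ univ.filter (fun j => i < j), qcov ρ (A i) (A j) with hC2
  set P : ℝ := ∑ i : Fin N, ∑ j ∈ univ.filter (fun j => i < j), qvar ρ (A i + A j) with hPdef
  set Mn : ℝ := ∑ i : Fin N, ∑ j ∈ univ.filter (fun j => i < j), qvar ρ (A i - A j) with hMdef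
  set D : ℝ := ∑ i : Fin N, ∑ j ∈ univ.filter (fun j => i < j), qdev ρ (A i + A j) with hDdef
  set T : Matrix (Fin d) (Fin d) ℂ := ∑ i, A i with hT
  set qT : ℝ := qvar ρ T with hqTdef
  -- P expansion
  have hP : P = ((N : ℝ) - 1) * S + 2 * C2 := by
    have e1 : P = (∑ i : Fin N, ∑ j ∈ univ.filter (fun j => i < j),
        (qvar ρ (A i) + qvar ρ (A j)))
        + ∑ i : Fin N, ∑ j ∈ univ.filter (fun j => i < j), 2 * qcov ρ (A i) (A j) := by
      rw [hPdef, ← Finset.sum_add_distrib]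
      refine Finset.sum_congr rfl fun i _ => ?_
      rw [← Finset.sum_add_distrib]
      refine Finset.sum_congr rfl fun j _ => ?_
      rw [qvar_add]
    have e2 : ∑ i : Fin N, ∑ j ∈ univ.filter (fun j => i < j), 2 * qcov ρ (A i) (A j)
        = 2 * C2 := by
      rw [hC2, Finset.mul_sum]
      exact Finset.sum_congr rfl fun i _ => (Finset.mul_sum _ _ _).symm
    rw [e1, pair_sum_real hN, e2, hS]
  -- Mn expansion
  have hM : Mn = ((N : ℝ) - 1) * S - 2 * C2 := by
    have e1 : Mn = (∑ i : Fin N, ∑ j ∈ univ.filter (fun j => i < j),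
        (qvar ρ (A i) + qvar ρ (A j)))
        - ∑ i : Fin N, ∑ j ∈ univ.filter (fun j => i < j), 2 * qcov ρ (A i) (A j) := by
      rw [hMdef, ← Finset.sum_sub_distrib]
      refine Finset.sum_congr rfl fun i _ => ?_
      rw [← Finset.sum_sub_distrib]
      refine Finset.sum_congr rfl fun j _ => ?_
      rw [qvar_sub]
    have e2 : ∑ i : Fin N, ∑ j ∈ univ.filter (fun j => i < j), 2 * qcov ρ (A i) (A j)
        = 2 * C2 := by
      rw [hC2, Finset.mul_sum]
      exact Finset.sum_congr rfl fun i _ => (Finset.mul_sum _ _ _).symm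
    rw [e1, pair_sum_real hN, e2, hS]
  -- qT expansion
  have hqT : qT = S + 2 * C2 := by
    rw [hqTdef, hT, qvar_sum_eq, hS, hC2]
  -- Hermitian facts
  have hTH : T.IsHermitian :=
    Finset.sum_induction A Matrix.IsHermitian (fun a b => Matrix.IsHermitian.add)
      Matrix.isHermitian_zero (fun i _ => hA i)
  have hqT0 : 0 ≤ qT := qvar_nonneg hρ hρ1 hTH
  -- D bound
  have hD0 : 0 ≤ D := by
    rw [hDdef]
    apply Finset.sum_nonneg
    intro i _
    exact Finset.sum_nonneg fun j _ => Real.sqrt_nonneg _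
  have hDT : ((N : ℝ) - 1) * Real.sqrt qT ≤ D := by
    have hpair : ∑ i : Fin N, ∑ j ∈ univ.filter (fun j => i < j), (A i + A j) = (N - 1) • T :=
      pair_sum A
    have h1 : qdev ρ ((N - 1) • T) = ((N : ℝ) - 1) * Real.sqrt qT := by
      have : (N - 1) • T = (((N - 1 : ℕ) : ℝ)) • T := (Nat.cast_smul_eq_nsmul ℝ _ _).symm
      rw [this]
      unfold qdev
      rw [qvar_smul, Real.sqrt_mul (sq_nonneg _), Real.sqrt_sq (Nat.cast_nonneg _)]
      rw [Nat.cast_sub (by omega : 1 ≤ N)]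
      norm_num
      exact Or.inl rfl
    have h2 : qdev ρ (∑ i : Fin N, ∑ j ∈ univ.filter (fun j => i < j), (A i + A j)) ≤ D := by
      calc qdev ρ (∑ i : Fin N, ∑ j ∈ univ.filter (fun j => i < j), (A i + A j))
          ≤ ∑ i : Fin N, qdev ρ (∑ j ∈ univ.filter (fun j => i < j), (A i + A j)) := by
            apply qdev_sum_le hρ hρ1
            intro i _
            exact Finset.sum_induction _ Matrix.IsHermitian (fun a b => Matrix.IsHermitian.add)
              Matrix.isHermitian_zero (fun j _ => (hA i).add (hA j))
        _ ≤ D := by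
            rw [hDdef]
            apply Finset.sum_le_sum
            intro i _
            exact qdev_sum_le hρ hρ1 _ _ (fun j _ => (hA i).add (hA j))
    rw [← h1, ← hpair]
    exact h2
  have hDsq : (((N : ℝ) - 1) ^ 2) * qT ≤ D ^ 2 := by
    have hs : Real.sqrt qT ^ 2 = qT := Real.sq_sqrt hqT0
    have hnn : 0 ≤ ((N : ℝ) - 1) * Real.sqrt qT := by
      have := Real.sqrt_nonneg qT
      nlinarith
    nlinarith [hDT, hnn]
  -- final arithmetic
  set K : ℝ := α * N + ((N : ℝ) - 2) * β with hK
  have hKpos : 0 < K := by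
    have h1 : 0 ≤ ((N : ℝ) - 2) * β :=
      mul_nonneg (by linarith) (by linarith)
    have h2 : 0 < α * (N : ℝ) := mul_pos hα (by linarith)
    rw [hK]
    linarith
  have hD2 : ((α - β) / ((N : ℝ) - 1) ^ 2) * D ^ 2 ≤ (α - β) * qT := by
    have hne : ((N : ℝ) - 1) ^ 2 ≠ 0 := by nlinarith
    have h1 : 0 ≤ (β - α) / ((N : ℝ) - 1) ^ 2 := div_nonneg (by linarith) (sq_nonneg _)
    have h2 := mul_le_mul_of_nonneg_left hDsq h1
    have h3 : (β - α) / ((N : ℝ) - 1) ^ 2 * ((((N : ℝ) - 1) ^ 2) * qT) = (β - α) * qT := by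
      rw [div_mul_eq_mul_div, div_eq_iff hne]
      ring
    rw [h3] at h2
    have e : (α - β) / ((N : ℝ) - 1) ^ 2 * D ^ 2
        = -((β - α) / ((N : ℝ) - 1) ^ 2 * D ^ 2) := by ring
    have e2 : (α - β) * qT = -((β - α) * qT) := by ring
    rw [e, e2]
    exact neg_le_neg h2
  have hnum : β * P + α * Mn + (α - β) * qT = K * S := by
    rw [hP, hM, hqT, hK]
    ring
  have hle : β * P + α * Mn + ((α - β) / ((N : ℝ) - 1) ^ 2) * D ^ 2 ≤ K * S := by
    calc β * P + α * Mn + ((α - β) / ((N : ℝ) - 1) ^ 2) * D ^ 2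
        ≤ β * P + α * Mn + (α - β) * qT := by linarith [hD2]
      _ = K * S := hnum
  have hfin : (1 / K) * (β * P + α * Mn + ((α - β) / ((N : ℝ) - 1) ^ 2) * D ^ 2) ≤ S := by
    have h1 : (1 / K) * (β * P + α * Mn + ((α - β) / ((N : ℝ) - 1) ^ 2) * D ^ 2)
        ≤ (1 / K) * (K * S) := by
      apply mul_le_mul_of_nonneg_left hle (by positivity)
    have h2 : (1 / K) * (K * S) = S := by
      field_simp
    linarith [h1, h2]
  exact hfin
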